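/- If the 2-step nilpotent metric Lie algebra satisfies [n,n] ⊆ U and E = {0}, then the curvature tensor R of the associated left-invariant connection vanishes identically: N is flat. -/

import Mathlib

/-- If the 2-step nilpotent metric Lie algebra satisfies `[n,n] ⊆ U` and `E = {0}`,
then the curvature tensor `R` of the associated left-invariant connection vanishes
identically: `N` is flat. -/
theorem flat_when_brackets_in_U_and_no_E
    {n : Type*} [LieRing n] [LieAlgebra ℝ n]
    (B : LinearMap.BilinForm ℝ n) (hBsymm : ∀ x y : n, B x y = B y x)
    (hBnd : B.Nondegenerate)
    (U Z V E : Submodule ℝ n)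
    (hcent : ∀ c ∈ U ⊔ Z, ∀ x : n, ⁅c, x⁆ = 0)
    (hdecomp : U ⊔ Z ⊔ V ⊔ E = ⊤)
    (hUU : ∀ u ∈ U, ∀ u' ∈ U, B u u' = 0)
    (hVV : ∀ v ∈ V, ∀ v' ∈ V, B v v' = 0)
    (hUZ : ∀ u ∈ U, ∀ z ∈ Z, B u z = 0)
    (hVZ : ∀ v ∈ V, ∀ z ∈ Z, B v z = 0)
    (hbrU : ∀ x y : n, ⁅x, y⁆ ∈ U)
    (hE : E = ⊥)
    (adP : n →ₗ[ℝ] n →ₗ[ℝ] n)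
    (hadP : ∀ x y w : n, B (adP x y) w = B y ⁅x, w⁆)
    (nabla : n → n → n)
    (hnabla : ∀ x y : n, nabla x y = (2:ℝ)⁻¹ • (⁅x, y⁆ - adP x y - adP y x))
    (R : n → n → n → n)
    (hR : ∀ x y w : n,
      R x y w = nabla x (nabla y w) - nabla y (nabla x w) - nabla ⁅x, y⁆ w) :
    ∀ x y w : n, R x y w = 0 := by
  -- every element decomposes as u + z + v
  have hE' : U ⊔ Z ⊔ V = ⊤ := by
    rw [hE, sup_bot_eq] at hdecomp; exact hdecomp
  have hdec : ∀ t : n, ∃ u ∈ U, ∃ z ∈ Z, ∃ v ∈ V, t = u + z + v := by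
    intro t
    have ht : t ∈ U ⊔ Z ⊔ V := hE' ▸ Submodule.mem_top
    rcases Submodule.mem_sup.mp ht with ⟨a, ha, v, hv, hav⟩
    rcases Submodule.mem_sup.mp ha with ⟨u, hu, z, hz, huz⟩
    exact ⟨u, hu, z, hz, v, hv, by rw [← hav, ← huz]⟩
  -- anything orthogonal to U and Z lies in U
  have memU : ∀ t : n, (∀ u' ∈ U, B t u' = 0) → (∀ z' ∈ Z, B t z' = 0) → t ∈ U := by
    intro t hU0 hZ0
    rcases hdec t with ⟨u, hu, z, hz, v, hv, rfl⟩
    have hz0 : z = 0 := by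
      apply hBnd.1
      intro s
      rcases hdec s with ⟨u', hu', z', hz', v', hv', rfl⟩
      have h1 : B z z' = 0 := by
        have := hZ0 z' hz'
        simp only [map_add, LinearMap.add_apply] at this
        rw [hUZ u hu z' hz', hBsymm v z', hBsymm z' v,
          hVZ v hv z' hz'] at this
        simpa using this
      have h2 : B z u' = 0 := by rw [hBsymm]; exact hUZ u' hu' z hz
      have h3 : B z v' = 0 := by rw [hBsymm]; exact hVZ v' hv' z hz
      simp [h1, h2, h3]
    have hv0 : v = 0 := by
      apply hBnd.1
      intro s
      rcases hdec s with ⟨u', hu', z', hz', v', hv', rfl⟩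
      have h1 : B v u' = 0 := by
        have := hU0 u' hu'
        simp only [map_add, LinearMap.add_apply] at this
        rw [hUU u hu u' hu', hBsymm z u', hUZ u' hu' z hz] at this
        simpa using this
      have h2 : B v z' = 0 := hVZ v hv z' hz'
      have h3 : B v v' = 0 := hVV v hv v' hv'
      simp [h1, h2, h3]
    simpa [hz0, hv0] using hu
  -- elements of U ⊔ Z are central
  have hcentU : ∀ u ∈ U, ∀ x : n, ⁅u, x⁆ = 0 := fun u hu =>
    hcent u (Submodule.mem_sup_left hu)
  have hcentZ : ∀ z ∈ Z, ∀ x : n, ⁅z, x⁆ = 0 := fun z hz =>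
    hcent z (Submodule.mem_sup_right hz)
  -- adP lands in U
  have hadPU : ∀ x y : n, adP x y ∈ U := by
    intro x y
    apply memU
    · intro u' hu'
      rw [hadP, ← lie_skew, hcentU u' hu' x, neg_zero, map_zero]
    · intro z' hz'
      rw [hadP, ← lie_skew, hcentZ z' hz' x, neg_zero, map_zero]
  -- nabla lands in U
  have hnablaU : ∀ x y : n, nabla x y ∈ U := by
    intro x y
    rw [hnabla]
    exact Submodule.smul_mem _ _ (Submodule.sub_mem _
      (Submodule.sub_mem _ (hbrU x y) (hadPU x y)) (hadPU y x))
  -- nabla x s = 0 when s ∈ U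
  have hnabla_right : ∀ x : n, ∀ s ∈ U, nabla x s = 0 := by
    intro x s hs
    rw [hnabla]
    have h1 : ⁅x, s⁆ = 0 := by rw [← lie_skew, hcentU s hs x, neg_zero]
    have h2 : adP x s = 0 := by
      apply hBnd.1
      intro t
      rw [hadP]
      exact hUU s hs _ (hbrU x t)
    have h3 : adP s x = 0 := by
      apply hBnd.1
      intro t
      rw [hadP, hcentU s hs t, map_zero]
    simp [h1, h2, h3]
  -- nabla s w = 0 when s ∈ U
  have hnabla_left : ∀ s ∈ U, ∀ w : n, nabla s w = 0 := by
    intro s hs w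
    rw [hnabla]
    have h1 : ⁅s, w⁆ = 0 := hcentU s hs w
    have h2 : adP s w = 0 := by
      apply hBnd.1
      intro t
      rw [hadP, hcentU s hs t, map_zero]
    have h3 : adP w s = 0 := by
      apply hBnd.1
      intro t
      rw [hadP]
      exact hUU s hs _ (hbrU w t)
    simp [h1, h2, h3]
  intro x y w
  rw [hR, hnabla_right x _ (hnablaU y w), hnabla_right y _ (hnablaU x w),
    hnabla_left _ (hbrU x y) w]
  simp
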